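/- Fix a positive integer ρ. For each integer s, in ℚ[[t]] set a = 1+(1−s/ρ)t and b = 1+(2−s/ρ)t, let u be the unique power series with constant term 1 satisfying u^{ρ} = a^{ρ−s}, and set z_s(t) = t·u (which has zero constant term and linear coefficient 1). Let V_s ∈ ℚ[[z]] be the unique power series with V_s(z_s(t)) = a^{ρ−s}·b^{s} in ℚ[[t]]. Then for every integer n ≥ 0 there exists a polynomial p_n ∈ ℚ[X] of degree at most 2n such that for every integer s, the coefficient of z^n in V_s equals p_n(s). -/

import Mathlib

open PowerSeries

/-- Composition (substitution) `f(g)` of formal power series, correct whenever the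
constant term of `g` vanishes. -/
noncomputable def comp (f g : ℚ⟦X⟧) : ℚ⟦X⟧ :=
  PowerSeries.mk fun n => ∑ k ∈ Finset.range (n + 1), coeff k f * coeff n (g ^ k)

/-- Integer power of a formal power series (using the formal inverse for negative
exponents). -/
noncomputable def zp (f : ℚ⟦X⟧) (n : ℤ) : ℚ⟦X⟧ :=
  f ^ n.toNat * f⁻¹ ^ (-n).toNat

open Finset in
lemma choose_key (r : ℚ) (n : ℕ) :
    Ring.choose r n = ((descPochhammer ℚ n).eval r) / n.factorial := by
  have h1 := Ring.descPochhammer_eq_factorial_smul_choose (R := ℚ) r n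
  have h2 : (descPochhammer ℤ n).smeval r = (descPochhammer ℚ n).eval r := by
    rw [← Polynomial.aeval_eq_smeval, Polynomial.aeval_def, ← Polynomial.eval_map,
      descPochhammer_map]
  rw [h2] at h1
  rw [h1, nsmul_eq_mul]
  field_simp

noncomputable def W (c r : ℚ) : ℚ⟦X⟧ := PowerSeries.mk fun n => c ^ n * Ring.choose r n

lemma coeff_W (c r : ℚ) (n : ℕ) : coeff n (W c r) = c ^ n * Ring.choose r n :=
  coeff_mk _ _

lemma constantCoeff_W (c r : ℚ) : constantCoeff (W c r) = 1 := by
  rw [← coeff_zero_eq_constantCoeff, coeff_W, pow_zero, Ring.choose_zero_right, one_mul]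

lemma W_add (c r r' : ℚ) : W c (r + r') = W c r * W c r' := by
  ext n
  rw [coeff_W, PowerSeries.coeff_mul, Ring.add_choose_eq n (Commute.all r r'), Finset.mul_sum]
  refine Finset.sum_congr rfl fun ij hij => ?_
  rw [Finset.HasAntidiagonal.mem_antidiagonal] at hij
  rw [coeff_W, coeff_W, ← hij, pow_add]
  ring

lemma W_zero (c : ℚ) : W c 0 = 1 := by
  ext n
  rw [coeff_W, Ring.choose_zero_ite]
  cases n with
  | zero => simp
  | succ k => simp

lemma W_one (c : ℚ) : W c 1 = 1 + C c * X := by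
  ext n
  rw [coeff_W]
  have h1 : (1 : ℚ) = ((1 : ℕ) : ℚ) := by norm_num
  rw [h1, Ring.choose_natCast]
  match n with
  | 0 => simp
  | 1 => simp
  | (k+2) => simp [Nat.choose_eq_zero_of_lt, PowerSeries.coeff_X]

lemma W_pow (c r : ℚ) (k : ℕ) : (W c r) ^ k = W c (k * r) := by
  induction k with
  | zero => simp [W_zero]
  | succ m ih =>
    rw [pow_succ, ih, ← W_add]
    congr 1
    push_cast
    ring

lemma W_inv (c : ℚ) : (1 + C c * X)⁻¹ = W c (-1) := by
  rw [PowerSeries.inv_eq_iff_mul_eq_one (by simp)]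
  rw [← W_one, ← W_add]
  norm_num [W_zero]

lemma zp_eq_W (c : ℚ) (m : ℤ) : zp (1 + C c * X) m = W c m := by
  have hpos : ∀ k : ℕ, (1 + C c * X) ^ k = W c k := by
    intro k
    rw [← W_one, W_pow, mul_one]
  cases m with
  | ofNat k =>
    rw [zp]
    rw [show (Int.ofNat k).toNat = k by rfl, show (-(Int.ofNat k)).toNat = 0 by simp,
      pow_zero, mul_one, hpos]
    norm_num
  | negSucc k =>
    rw [zp]
    rw [show (Int.negSucc k).toNat = 0 by rfl, pow_zero, one_mul,
      show (-(Int.negSucc k)).toNat = k + 1 by rfl, W_inv, W_pow]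
    norm_num

lemma root_unique {ρ : ℕ} (hρ : 0 < ρ) {f g : ℚ⟦X⟧}
    (hf : constantCoeff f = 1) (hg : constantCoeff g = 1)
    (h : f ^ ρ = g ^ ρ) : f = g := by
  have key : (∑ i ∈ Finset.range ρ, f ^ i * g ^ (ρ - 1 - i)) * (f - g) = 0 := by
    rw [geom_sum₂_mul, h, sub_self]
  have hne : (∑ i ∈ Finset.range ρ, f ^ i * g ^ (ρ - 1 - i)) ≠ 0 := by
    intro h0
    have : constantCoeff (∑ i ∈ Finset.range ρ, f ^ i * g ^ (ρ - 1 - i)) = ρ := by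
      rw [map_sum]
      simp [hf, hg]
    rw [h0] at this
    simp only [map_zero] at this
    exact (Nat.cast_ne_zero.mpr hρ.ne').symm (by exact_mod_cast this)
  rcases mul_eq_zero.mp key with h1 | h2
  · exact absurd h1 hne
  · exact sub_eq_zero.mp h2

/-- coefficient of W as a polynomial -/
lemma polyW (pc pr : Polynomial ℚ) (hc : pc.natDegree ≤ 1) (hr : pr.natDegree ≤ 1) (n : ℕ) :
    ∃ p : Polynomial ℚ, p.natDegree ≤ 2 * n ∧
      ∀ x : ℚ, p.eval x = coeff n (W (pc.eval x) (pr.eval x)) := by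
  refine ⟨Polynomial.C ((n.factorial : ℚ))⁻¹ * pc ^ n * ((descPochhammer ℚ n).comp pr), ?_, ?_⟩
  · calc (Polynomial.C ((n.factorial : ℚ))⁻¹ * pc ^ n *
        ((descPochhammer ℚ n).comp pr)).natDegree
        ≤ (Polynomial.C ((n.factorial : ℚ))⁻¹ * pc ^ n).natDegree
          + ((descPochhammer ℚ n).comp pr).natDegree := Polynomial.natDegree_mul_le
      _ ≤ ((Polynomial.C ((n.factorial : ℚ))⁻¹).natDegree + (pc ^ n).natDegree)
          + (descPochhammer ℚ n).natDegree * pr.natDegree :=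
            add_le_add Polynomial.natDegree_mul_le Polynomial.natDegree_comp_le
      _ ≤ (0 + n * 1) + n * 1 := by
          refine add_le_add (add_le_add (le_of_eq (Polynomial.natDegree_C _)) ?_) ?_
          · exact Polynomial.natDegree_pow_le.trans (Nat.mul_le_mul_left n hc)
          · rw [descPochhammer_natDegree]
            exact Nat.mul_le_mul_left n hr
      _ = 2 * n := by ring
  · intro x
    rw [coeff_W, choose_key]
    simp [Polynomial.eval_comp]
    ring

def PolyDeg (d : ℕ) (f : ℤ → ℚ) : Prop :=
  ∃ p : Polynomial ℚ, p.natDegree ≤ d ∧ ∀ s : ℤ, f s = p.eval (s : ℚ)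

lemma PolyDeg.mono {d e : ℕ} {f : ℤ → ℚ} (h : PolyDeg d f) (hde : d ≤ e) : PolyDeg e f := by
  obtain ⟨p, hp, he⟩ := h
  exact ⟨p, hp.trans hde, he⟩

lemma PolyDeg.mul {d e : ℕ} {f g : ℤ → ℚ} (hf : PolyDeg d f) (hg : PolyDeg e g) :
    PolyDeg (d + e) (fun s => f s * g s) := by
  obtain ⟨p, hp, hep⟩ := hf
  obtain ⟨q, hq, heq⟩ := hg
  refine ⟨p * q, Polynomial.natDegree_mul_le.trans (add_le_add hp hq), fun s => ?_⟩
  show f s * g s = _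
  rw [Polynomial.eval_mul, hep, heq]

lemma PolyDeg.sub {d : ℕ} {f g : ℤ → ℚ} (hf : PolyDeg d f) (hg : PolyDeg d g) :
    PolyDeg d (fun s => f s - g s) := by
  obtain ⟨p, hp, hep⟩ := hf
  obtain ⟨q, hq, heq⟩ := hg
  refine ⟨p - q, (Polynomial.natDegree_sub_le p q).trans (max_le hp hq), fun s => ?_⟩
  show f s - g s = _
  rw [Polynomial.eval_sub, hep, heq]

lemma PolyDeg.sum {d : ℕ} {ι : Type*} (t : Finset ι) (f : ι → ℤ → ℚ)
    (h : ∀ i ∈ t, PolyDeg d (f i)) : PolyDeg d (fun s => ∑ i ∈ t, f i s) := by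
  classical
  induction t using Finset.induction_on with
  | empty => exact ⟨0, by simp, by simp⟩
  | insert a t' hni ih =>
    obtain ⟨p, hp, hep⟩ := h a (Finset.mem_insert_self a t')
    obtain ⟨q, hq, heq⟩ := ih fun i hi => h i (Finset.mem_insert_of_mem hi)
    refine ⟨p + q, (Polynomial.natDegree_add_le p q).trans (max_le hp hq), fun s => ?_⟩
    show (∑ i ∈ insert a t', f i s) = _
    rw [Finset.sum_insert hni, Polynomial.eval_add, hep, ← heq s]

lemma polyDeg_coeff_W (α β γ δ : ℚ) (n : ℕ) :
    PolyDeg (2 * n) (fun s : ℤ => coeff n (W (α + β * s) (γ + δ * s))) := by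
  have hdeg : ∀ a b : ℚ, (Polynomial.C a + Polynomial.C b * Polynomial.X).natDegree ≤ 1 :=
    fun a b => (Polynomial.natDegree_add_le _ _).trans (max_le (by simp)
      ((Polynomial.natDegree_C_mul_le _ _).trans (by simp)))
  obtain ⟨p, hp, hep⟩ := polyW (Polynomial.C α + Polynomial.C β * Polynomial.X)
    (Polynomial.C γ + Polynomial.C δ * Polynomial.X) (hdeg α β) (hdeg γ δ) n
  refine ⟨p, hp, fun s => ?_⟩
  have h2 := hep ((s : ℤ) : ℚ)
  simp only [Polynomial.eval_add, Polynomial.eval_C, Polynomial.eval_mul,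
    Polynomial.eval_X] at h2
  exact h2.symm

lemma PolyDeg.congr {d : ℕ} {f g : ℤ → ℚ} (h : PolyDeg d f) (hfg : ∀ s, f s = g s) :
    PolyDeg d g := by
  obtain ⟨p, hp, hep⟩ := h
  exact ⟨p, hp, fun s => (hfg s).symm ▸ hep s⟩

/-- Polynomiality in `s` of the coefficients of the rank-ρ universal Segre series
`V_s`, defined by `V_s(z_s(t)) = a^{ρ-s}·b^{s}` where `a = 1+(1-s/ρ)t`,
`b = 1+(2-s/ρ)t`, `z_s(t) = t·u` and `u^ρ = a^{ρ-s}` with `u(0) = 1`: the coefficient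
of `z^n` in `V_s` is a polynomial in `s` of degree at most `2n`. -/
theorem coeff_V_polynomial_in_s (ρ : ℕ) (hρ : 0 < ρ)
    (u V : ℤ → ℚ⟦X⟧)
    (hu0 : ∀ s : ℤ, constantCoeff (u s) = 1)
    (hu : ∀ s : ℤ,
      (u s) ^ ρ = zp (1 + C (1 - (s : ℚ) / (ρ : ℚ)) * X) ((ρ : ℤ) - s))
    (hV : ∀ s : ℤ, comp (V s) (X * u s) =
      zp (1 + C (1 - (s : ℚ) / (ρ : ℚ)) * X) ((ρ : ℤ) - s) *
        zp (1 + C (2 - (s : ℚ) / (ρ : ℚ)) * X) s) :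
    ∀ n : ℕ, ∃ p : Polynomial ℚ, p.natDegree ≤ 2 * n ∧
      ∀ s : ℤ, coeff n (V s) = p.eval (s : ℚ) := by
  have hρQ : (ρ : ℚ) ≠ 0 := Nat.cast_ne_zero.mpr hρ.ne'
  -- identify u with a generalized binomial series
  have hu_eq : ∀ s : ℤ, u s = W (1 - (s:ℚ)/ρ) (((ρ:ℚ) - s)/ρ) := by
    intro s
    apply root_unique hρ (hu0 s) (constantCoeff_W _ _)
    rw [hu s, zp_eq_W, W_pow]
    congr 1
    push_cast
    field_simp
  -- coefficients of powers of X * u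
  have hXu : ∀ s : ℤ, ∀ n k : ℕ, k ≤ n →
      coeff n ((X * u s) ^ k)
        = coeff (n - k) (W (1 - (s:ℚ)/ρ) ((k:ℚ) * (((ρ:ℚ) - s)/ρ))) := by
    intro s n k hk
    rw [mul_pow, hu_eq, W_pow]
    have h := PowerSeries.coeff_X_pow_mul (W (1 - (s:ℚ)/ρ) ((k:ℚ) * (((ρ:ℚ) - (s:ℚ))/ρ))) k (n - k)
    rw [show n - k + k = n from by omega] at h
    exact h
  -- recursion for the coefficients of V
  have hrec : ∀ s : ℤ, ∀ n : ℕ, coeff n (V s) =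
      coeff n (W (1 - (s:ℚ)/ρ) ((ρ:ℚ) - s) * W (2 - (s:ℚ)/ρ) (s:ℚ)) -
      ∑ k ∈ Finset.range n, coeff k (V s) * coeff n ((X * u s) ^ k) := by
    intro s n
    have h1 : coeff n (comp (V s) (X * u s)) =
        (∑ k ∈ Finset.range n, coeff k (V s) * coeff n ((X * u s) ^ k))
          + coeff n (V s) := by
      rw [comp, coeff_mk, Finset.sum_range_succ]
      congr 1
      have h0 := PowerSeries.coeff_X_pow_mul ((u s) ^ n) n 0
      rw [zero_add] at h0
      have hone : coeff n ((X * u s) ^ n) = 1 := by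
        rw [mul_pow, h0, coeff_zero_eq_constantCoeff, map_pow, hu0, one_pow]
      rw [hone, mul_one]
    have h2 : coeff n (comp (V s) (X * u s)) =
        coeff n (W (1 - (s:ℚ)/ρ) ((ρ:ℚ) - s) * W (2 - (s:ℚ)/ρ) (s:ℚ)) := by
      rw [hV s, zp_eq_W, zp_eq_W]
      congr 2
      push_cast
      ring
    rw [h2] at h1
    linarith [h1]
  -- main strong induction
  intro n
  induction n using Nat.strong_induction_on with
  | _ n ih =>
    show PolyDeg (2 * n) fun s : ℤ => coeff n (V s)
    have hA : PolyDeg (2 * n)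
        (fun s : ℤ => coeff n (W (1 - (s:ℚ)/ρ) ((ρ:ℚ) - s) * W (2 - (s:ℚ)/ρ) (s:ℚ))) := by
      simp only [PowerSeries.coeff_mul]
      apply PolyDeg.sum
      intro ij hij
      rw [Finset.HasAntidiagonal.mem_antidiagonal] at hij
      refine PolyDeg.congr
        (((polyDeg_coeff_W 1 (-(1/(ρ:ℚ))) (ρ:ℚ) (-1) ij.1).mul
          (polyDeg_coeff_W 2 (-(1/(ρ:ℚ))) 0 1 ij.2)).mono (by omega)) ?_
      intro s
      congr 2
      · congr 1 <;> ring
      · congr 1 <;> ring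
    have hB : PolyDeg (2 * n)
        (fun s : ℤ => ∑ k ∈ Finset.range n,
          coeff k (V s) * coeff n ((X * u s) ^ k)) := by
      apply PolyDeg.sum
      intro k hk
      rw [Finset.mem_range] at hk
      have hk' : k ≤ n := hk.le
      have h1 : PolyDeg (2 * k) (fun s : ℤ => coeff k (V s)) := ih k hk
      have h2 : PolyDeg (2 * (n - k))
          (fun s : ℤ => coeff n ((X * u s) ^ k)) := by
        refine PolyDeg.congr
          (polyDeg_coeff_W 1 (-(1/(ρ:ℚ))) (k:ℚ) (-((k:ℚ)/ρ)) (n - k)) ?_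
        intro s
        rw [hXu s n k hk']
        congr 2 <;> field_simp <;> ring
      exact (h1.mul h2).mono (by omega)
    exact PolyDeg.congr (hA.sub hB) (fun s => (hrec s n).symm)
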